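/- Under Assumptions A and B there exist constants L₀ and N₀, depending only on k1, k2, c₁, p and γ, such that whenever L ≥ L₀ and N ≥ N₀, if vᵃ is a homogeneous atomistic state with control θᵃ ∈ ℝ², vᶜ is a homogeneous continuum state with control θᶜ ∈ ℝ, and vᵃ_i = vᶜ_i for all K ≤ i ≤ L, then θᵃ = (0,0), θᶜ = 0, vᵃ_i = 0 for all 0 ≤ i ≤ L, and vᶜ_i = 0 for all K ≤ i ≤ N̄; consequently the symmetric bilinear form ⟨(θᵃ,θᶜ),(μᵃ,μᶜ)⟩ = Σ_{i=K}^{L} (vᵃ(θᵃ)_i − vᶜ(θᶜ)_i)(vᵃ(μᵃ)_i − vᶜ(μᶜ)_i) is an inner product on ℝ² × ℝ. -/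

import Mathlib

/-- A function whose (scaled) second differences vanish on `[K+1, N-2]` is affine on `[K, N-1]`. -/
lemma cont_affine (kc : ℝ) (hkc : kc ≠ 0) (K N : ℤ) (vc : ℤ → ℝ)
    (heq : ∀ i, K + 1 ≤ i → i ≤ N - 2 → -kc * (vc (i - 1) - 2 * vc i + vc (i + 1)) = 0) :
    ∀ i, K ≤ i → i ≤ N - 1 →
      vc i = vc K + (vc (K + 1) - vc K) * ((i : ℝ) - (K : ℝ)) := by
  have step : ∀ m : ℕ, K + m + 1 ≤ N - 1 → vc (K + m + 1) - vc (K + m) = vc (K + 1) - vc K := by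
    intro m
    induction m with
    | zero => intro _; norm_num
    | succ n ih =>
      intro h
      have e := heq (K + n + 1) (by omega) (by omega)
      rw [show K + n + 1 - 1 = K + (n : ℤ) by ring] at e
      have h0 : vc (K + n) - 2 * vc (K + n + 1) + vc (K + n + 1 + 1) = 0 := by
        rcases mul_eq_zero.mp e with h' | h'
        · exact absurd (by linarith [h'] : kc = 0) hkc
        · exact h'
      have ihn := ih (by omega)
      push_cast
      rw [show K + ((n : ℤ) + 1) + 1 = K + (n : ℤ) + 1 + 1 by ring,
          show K + ((n : ℤ) + 1) = K + (n : ℤ) + 1 by ring]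
      linarith
  have main : ∀ m : ℕ, K + m ≤ N - 1 →
      vc (K + m) = vc K + (vc (K + 1) - vc K) * (m : ℝ) := by
    intro m
    induction m with
    | zero => intro _; norm_num
    | succ n ih =>
      intro h
      have hs := step n (by omega)
      have ihn := ih (by omega)
      have harg : K + ((n : ℤ) + 1) = K + (n : ℤ) + 1 := by ring
      push_cast
      rw [harg]
      push_cast at ihn
      linarith
  intro i hKi hiN
  have h1 : i = K + ((i - K).toNat : ℤ) := by omega
  have h2 := main (i - K).toNat (by omega)
  rw [← h1] at h2
  rw [h2]
  have : (((i - K).toNat : ℤ) : ℝ) = (i : ℝ) - (K : ℝ) := by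
    push_cast [Int.toNat_of_nonneg (by omega : (0:ℤ) ≤ i - K)]
    ring
  push_cast at this ⊢
  rw [show (((i-K).toNat : ℕ) : ℝ) = (i : ℝ) - (K : ℝ) from by exact_mod_cast this]

/-- Downward propagation of vanishing for the 4th order atomistic recurrence. -/
lemma atom_down (k1 k2 : ℝ) (hk2 : k2 ≠ 0) (K L : ℤ) (w : ℤ → ℝ)
    (hK : 0 ≤ K) (hKL : K ≤ L - 4)
    (heq : ∀ i, 2 ≤ i → i ≤ L - 2 →
      -k1 * (w (i - 1) - 2 * w i + w (i + 1))
        - k2 * (w (i - 2) - 2 * w i + w (i + 2)) = 0)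
    (hov : ∀ i, K ≤ i → i ≤ L → w i = 0) :
    ∀ i, 0 ≤ i → i ≤ L → w i = 0 := by
  have main : ∀ m : ℕ, ∀ i, K - m ≤ i → 0 ≤ i → i ≤ L → w i = 0 := by
    intro m
    induction m with
    | zero => intro i h1 h2 h3; exact hov i (by omega) h3
    | succ n ih =>
      intro i h1 h2 h3
      by_cases hc : K - n ≤ i
      · exact ih i hc h2 h3
      · -- i = K - n - 1, in particular i ≤ L - 5
        have e := heq (i + 2) (by omega) (by omega)
        rw [show i + 2 - 1 = i + 1 by ring, show i + 2 - 2 = i by ring,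
            show i + 2 + 1 = i + 3 by ring, show i + 2 + 2 = i + 4 by ring] at e
        have z1 : w (i + 1) = 0 := ih (i + 1) (by omega) (by omega) (by omega)
        have z2 : w (i + 2) = 0 := ih (i + 2) (by omega) (by omega) (by omega)
        have z3 : w (i + 3) = 0 := ih (i + 3) (by omega) (by omega) (by omega)
        have z4 : w (i + 4) = 0 := ih (i + 4) (by omega) (by omega) (by omega)
        rw [z1, z2, z3, z4] at e
        have : k2 * w i = 0 := by linarith
        rcases mul_eq_zero.mp this with h' | h'
        · exact absurd h' hk2
        · exact h'
  intro i h1 h2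
  exact main (K - i).toNat i (by omega) h1 h2



/-- definiteness of the mismatch form (Theorem `norm1` of the paper):
if the homogeneous atomistic and continuum states agree on the overlap, then all
controls and states vanish; consequently the symmetric bilinear form
`⟨(θᵃ,θᶜ),(μᵃ,μᶜ)⟩ = Σ_{i=K}^{L} (vᵃ(θᵃ)_i − vᶜ(θᶜ)_i)(vᵃ(μᵃ)_i − vᶜ(μᶜ)_i)`
is an inner product on `ℝ² × ℝ`. -/
theorem mismatch_form_inner_product (k1 k2 c₁ p γ : ℝ)
    (hk1 : 0 < k1) (hk2 : k2 < 0) (hk : 0 < k1 + 4 * k2)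
    (hc₁ : 0 < c₁) (hp : 1 < p) (hγ1 : γ < 1) :
    ∃ (L₀ N₀ : ℤ),
      ∀ (N K L : ℤ),
        5 ≤ N → 0 < K → K < L → L ≤ N - 1 → 4 ≤ L →
        L₀ ≤ L → N₀ ≤ N →
        -- Assumption A
        (L : ℝ) ≤ c₁ * (N : ℝ) ^ (1 / p) →
        -- Assumption B
        3 / (L : ℝ) < γ →
        (L : ℝ) - (K : ℝ) = γ * (L : ℝ) →
        -- Part 1: agreement on the overlap forces everything to vanish
        ((∀ (θa : ℝ × ℝ) (θc : ℝ) (va vc : ℤ → ℝ),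
          (∀ i, 2 ≤ i → i ≤ L - 2 →
            -k1 * (va (i - 1) - 2 * va i + va (i + 1))
              - k2 * (va (i - 2) - 2 * va i + va (i + 2)) = 0) →
          va 0 = 0 → va 1 = 0 → va (L - 1) = θa.1 → va L = θa.2 →
          (∀ i, K + 1 ≤ i → i ≤ N - 2 →
            -(k1 + 4 * k2) * (vc (i - 1) - 2 * vc i + vc (i + 1)) = 0) →
          vc K = θc → vc (N - 1) = 0 →
          (∀ i, K ≤ i → i ≤ L → va i = vc i) →
          θa = (0, 0) ∧ θc = 0 ∧ (∀ i, 0 ≤ i → i ≤ L → va i = 0) ∧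
            (∀ i, K ≤ i → i ≤ N - 1 → vc i = 0))
        -- Part 2: consequently the form is an inner product on ℝ² × ℝ
        ∧ (∀ (vA : ℝ × ℝ → ℤ → ℝ) (vC : ℝ → ℤ → ℝ),
          -- vA θa is the (unique) homogeneous atomistic state with control θa
          (∀ θa : ℝ × ℝ,
            (∀ i, 2 ≤ i → i ≤ L - 2 →
              -k1 * (vA θa (i - 1) - 2 * vA θa i + vA θa (i + 1))
                - k2 * (vA θa (i - 2) - 2 * vA θa i + vA θa (i + 2)) = 0) ∧
            vA θa 0 = 0 ∧ vA θa 1 = 0 ∧ vA θa (L - 1) = θa.1 ∧ vA θa L = θa.2) →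
          (∀ (θa : ℝ × ℝ) (w : ℤ → ℝ),
            (∀ i, 2 ≤ i → i ≤ L - 2 →
              -k1 * (w (i - 1) - 2 * w i + w (i + 1))
                - k2 * (w (i - 2) - 2 * w i + w (i + 2)) = 0) →
            w 0 = 0 → w 1 = 0 → w (L - 1) = θa.1 → w L = θa.2 →
            ∀ i, 0 ≤ i → i ≤ L → w i = vA θa i) →
          -- vC θc is the (unique) homogeneous continuum state with control θc
          (∀ θc : ℝ,
            (∀ i, K + 1 ≤ i → i ≤ N - 2 →
              -(k1 + 4 * k2) * (vC θc (i - 1) - 2 * vC θc i + vC θc (i + 1)) = 0) ∧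
            vC θc K = θc ∧ vC θc (N - 1) = 0) →
          (∀ (θc : ℝ) (w : ℤ → ℝ),
            (∀ i, K + 1 ≤ i → i ≤ N - 2 →
              -(k1 + 4 * k2) * (w (i - 1) - 2 * w i + w (i + 1)) = 0) →
            w K = θc → w (N - 1) = 0 →
            ∀ i, K ≤ i → i ≤ N - 1 → w i = vC θc i) →
          -- symmetry
          (∀ (θa μa : ℝ × ℝ) (θc μc : ℝ),
            (∑ i ∈ Finset.Icc K L, (vA θa i - vC θc i) * (vA μa i - vC μc i)) =
            (∑ i ∈ Finset.Icc K L, (vA μa i - vC μc i) * (vA θa i - vC θc i))) ∧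
          -- bilinearity (in the first argument; symmetry gives the second)
          (∀ (θa μa : ℝ × ℝ) (θc μc νc : ℝ) (νa : ℝ × ℝ) (s t : ℝ),
            (∑ i ∈ Finset.Icc K L,
                (vA (s • θa + t • μa) i - vC (s * θc + t * μc) i)
                  * (vA νa i - vC νc i)) =
              s * (∑ i ∈ Finset.Icc K L,
                    (vA θa i - vC θc i) * (vA νa i - vC νc i))
                + t * (∑ i ∈ Finset.Icc K L,
                    (vA μa i - vC μc i) * (vA νa i - vC νc i))) ∧
          -- positive definiteness
          (∀ (θa : ℝ × ℝ) (θc : ℝ), (θa, θc) ≠ ((0, 0), 0) →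
            0 < ∑ i ∈ Finset.Icc K L, (vA θa i - vC θc i) * (vA θa i - vC θc i)))) := by
  refine ⟨0, 0, ?_⟩
  intro N K L hN hK hKL hLN hL4 _ _ hAssA hB1 hB2
  -- Assumption B forces the overlap to have length at least 4
  have hLK4 : K ≤ L - 4 := by
    have hLpos : (0:ℝ) < (L:ℝ) := by exact_mod_cast (by omega : (0:ℤ) < L)
    have h3 : (3:ℝ) < γ * L := by
      rw [div_lt_iff₀ hLpos] at hB1; linarith [hB1]
    have h3' : (3:ℝ) < (L:ℝ) - (K:ℝ) := by rw [hB2]; exact h3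
    have : (3:ℤ) < L - K := by
      exact_mod_cast (by push_cast; linarith : ((3:ℤ):ℝ) < ((L - K : ℤ):ℝ))
    omega
  have part1 : (∀ (θa : ℝ × ℝ) (θc : ℝ) (va vc : ℤ → ℝ),
          (∀ i, 2 ≤ i → i ≤ L - 2 →
            -k1 * (va (i - 1) - 2 * va i + va (i + 1))
              - k2 * (va (i - 2) - 2 * va i + va (i + 2)) = 0) →
          va 0 = 0 → va 1 = 0 → va (L - 1) = θa.1 → va L = θa.2 →
          (∀ i, K + 1 ≤ i → i ≤ N - 2 →
            -(k1 + 4 * k2) * (vc (i - 1) - 2 * vc i + vc (i + 1)) = 0) →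
          vc K = θc → vc (N - 1) = 0 →
          (∀ i, K ≤ i → i ≤ L → va i = vc i) →
          θa = (0, 0) ∧ θc = 0 ∧ (∀ i, 0 ≤ i → i ≤ L → va i = 0) ∧
            (∀ i, K ≤ i → i ≤ N - 1 → vc i = 0)) := by
      intro θa θc va vc heqa hva0 hva1 hvaL1 hvaL heqc hvcK hvcN hagree
      have hkc : (k1 + 4 * k2) ≠ 0 := ne_of_gt hk
      have hk2' : k2 ≠ 0 := ne_of_lt hk2
      set d : ℝ := vc (K + 1) - vc K with hd
      have haff := cont_affine (k1 + 4 * k2) hkc K N vc heqc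
      -- the mismatch with the affine extension
      set w : ℤ → ℝ := fun i => va i - (vc K + d * ((i : ℝ) - (K : ℝ))) with hw
      have hweq : ∀ i, 2 ≤ i → i ≤ L - 2 →
          -k1 * (w (i - 1) - 2 * w i + w (i + 1))
            - k2 * (w (i - 2) - 2 * w i + w (i + 2)) = 0 := by
        intro i h1 h2
        have e := heqa i h1 h2
        simp only [hw]
        push_cast
        linear_combination e
      have hov : ∀ i, K ≤ i → i ≤ L → w i = 0 := by
        intro i h1 h2
        simp only [hw]
        rw [hagree i h1 h2, haff i h1 (by omega)]
        ring
      have hzero := atom_down k1 k2 hk2' K L w (by omega) hLK4 hweq hov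
      have e0 : va 0 - (vc K + d * (((0:ℤ) : ℝ) - (K : ℝ))) = 0 := hzero 0 le_rfl (by omega)
      have e1 : va 1 - (vc K + d * (((1:ℤ) : ℝ) - (K : ℝ))) = 0 := hzero 1 (by omega) (by omega)
      rw [hva0] at e0; rw [hva1] at e1
      push_cast at e0 e1
      have hd0 : d = 0 := by linear_combination e0 - e1
      have hvcK0 : vc K = 0 := by
        rw [hd0] at e0; linarith
      have hvaz : ∀ i, 0 ≤ i → i ≤ L → va i = 0 := by
        intro i h1 h2
        have := hzero i h1 h2
        simp only [hw] at this
        rw [hd0, hvcK0] at this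
        linarith
      have hvcz : ∀ i, K ≤ i → i ≤ N - 1 → vc i = 0 := by
        intro i h1 h2
        rw [haff i h1 h2, ← hd, hd0, hvcK0]; ring
      refine ⟨?_, ?_, hvaz, hvcz⟩
      · have h1 : θa.1 = 0 := by rw [← hvaL1]; exact hvaz (L - 1) (by omega) (by omega)
        have h2 : θa.2 = 0 := by rw [← hvaL]; exact hvaz L (by omega) le_rfl
        exact Prod.ext h1 h2
      · rw [← hvcK]; exact hvcz K le_rfl (by omega)
  refine ⟨part1, ?_⟩
  intro vA vC hAspec hAu hCspec hCu
  refine ⟨?_, ?_, ?_⟩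
  · -- symmetry
    intro θa μa θc μc
    exact Finset.sum_congr rfl (fun i _ => mul_comm _ _)
  · -- bilinearity
    intro θa μa θc μc νc νa s t
    -- linearity of the atomistic state on [0, L]
    obtain ⟨hAe1, hA01, hA11, hAL11, hAL1⟩ := hAspec θa
    obtain ⟨hAe2, hA02, hA12, hAL12, hAL2⟩ := hAspec μa
    have ha : ∀ i, 0 ≤ i → i ≤ L →
        s * vA θa i + t * vA μa i = vA (s • θa + t • μa) i := by
      refine hAu (s • θa + t • μa) (fun j => s * vA θa j + t * vA μa j)
        (fun i hi1 hi2 => ?_) ?_ ?_ ?_ ?_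
      · linear_combination s * hAe1 i hi1 hi2 + t * hAe2 i hi1 hi2
      · simp [hA01, hA02]
      · simp [hA11, hA12]
      · simp [hAL11, hAL12, Prod.smul_fst, Prod.fst_add, smul_eq_mul]
      · simp [hAL1, hAL2, Prod.smul_snd, Prod.snd_add, smul_eq_mul]
    obtain ⟨hCe1, hCK1, hCN1⟩ := hCspec θc
    obtain ⟨hCe2, hCK2, hCN2⟩ := hCspec μc
    have hc : ∀ i, K ≤ i → i ≤ N - 1 →
        s * vC θc i + t * vC μc i = vC (s * θc + t * μc) i := by
      refine hCu (s * θc + t * μc) (fun j => s * vC θc j + t * vC μc j)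
        (fun i hi1 hi2 => ?_) ?_ ?_
      · linear_combination s * hCe1 i hi1 hi2 + t * hCe2 i hi1 hi2
      · simp [hCK1, hCK2]
      · simp [hCN1, hCN2]
    rw [Finset.mul_sum, Finset.mul_sum, ← Finset.sum_add_distrib]
    refine Finset.sum_congr rfl (fun i hi => ?_)
    rw [Finset.mem_Icc] at hi
    rw [← ha i (by omega) hi.2, ← hc i hi.1 (by omega)]
    ring
  · -- positive definiteness
    intro θa θc hne
    have hnn : 0 ≤ ∑ i ∈ Finset.Icc K L, (vA θa i - vC θc i) * (vA θa i - vC θc i) :=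
      Finset.sum_nonneg (fun i _ => mul_self_nonneg _)
    rcases hnn.lt_or_eq with h | h
    · exact h
    · exfalso
      have hz : ∀ i ∈ Finset.Icc K L, (vA θa i - vC θc i) * (vA θa i - vC θc i) = 0 :=
        (Finset.sum_eq_zero_iff_of_nonneg (fun i _ => mul_self_nonneg _)).mp h.symm
      have hagree : ∀ i, K ≤ i → i ≤ L → vA θa i = vC θc i := by
        intro i h1 h2
        have := hz i (Finset.mem_Icc.mpr ⟨h1, h2⟩)
        have := mul_self_eq_zero.mp this
        linarith
      obtain ⟨hAe, hA0, hA1, hAL1, hAL⟩ := hAspec θa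
      obtain ⟨hCe, hCK, hCN⟩ := hCspec θc
      obtain ⟨h1, h2, _, _⟩ :=
        part1 θa θc (vA θa) (vC θc) hAe hA0 hA1 hAL1 hAL hCe hCK hCN hagree
      exact hne (by rw [h1, h2])
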